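/- Let m ≥ 2 be an integer with 8·log m ≤ m (natural logarithm), and let X_1, …, X_m, Y_1, …, Y_m be 2m independent real random variables, each with the standard Gaussian distribution N(0,1). Then P[ |Σ_{i=1}^m X_i·Y_i| ≥ √(8·m·log m) ] ≤ 2/m. -/

import Mathlib

open MeasureTheory ProbabilityTheory

open Real
open scoped NNReal ENNReal
lemma aux_integrable_gauss_lin (b a : ℝ) (hb : 0 < b) :
    Integrable (fun x : ℝ => exp (-b * x ^ 2 + a * x)) := by
  have h : ∀ x : ℝ, -b * x ^ 2 + a * x = a ^ 2 / (4 * b) + -b * (x - a / (2 * b)) ^ 2 := by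
    intro x; field_simp; ring
  simp_rw [h, exp_add]
  exact ((integrable_exp_neg_mul_sq hb).comp_sub_right (a / (2 * b))).const_mul _

lemma aux_integral_gauss_lin (b a : ℝ) (hb : 0 < b) :
    ∫ x : ℝ, exp (-b * x ^ 2 + a * x) = exp (a ^ 2 / (4 * b)) * Real.sqrt (π / b) := by
  have h : ∀ x : ℝ, -b * x ^ 2 + a * x = a ^ 2 / (4 * b) + -b * (x - a / (2 * b)) ^ 2 := by
    intro x; field_simp; ring
  simp_rw [h, exp_add]
  rw [MeasureTheory.integral_const_mul]
  congr 1
  rw [integral_sub_right_eq_self (fun x => exp (-b * x ^ 2)) (a / (2 * b))]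
  exact integral_gaussian b
open scoped NNReal ENNReal

lemma aux_integral_gaussianReal (f : ℝ → ℝ) :
    ∫ x, f x ∂(gaussianReal 0 1) = ∫ x, gaussianPDFReal 0 1 x * f x := by
  rw [gaussianReal_of_var_ne_zero 0 one_ne_zero, gaussianPDF_def]
  have h : (fun x => ENNReal.ofReal (gaussianPDFReal 0 1 x))
      = fun x => ((Real.toNNReal (gaussianPDFReal 0 1 x) : ℝ≥0) : ℝ≥0∞) := rfl
  rw [h, integral_withDensity_eq_integral_smul
    (show Measurable fun x => (gaussianPDFReal 0 1 x).toNNReal from measurable_real_toNNReal.comp (measurable_gaussianPDFReal 0 1)) f]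
  congr 1 with x
  rw [NNReal.smul_def, smul_eq_mul, Real.coe_toNNReal _ (gaussianPDFReal_nonneg 0 1 x)]

lemma aux_integrable_gaussianReal_iff (f : ℝ → ℝ) :
    Integrable f (gaussianReal 0 1) ↔ Integrable (fun x => gaussianPDFReal 0 1 x * f x) := by
  rw [gaussianReal_of_var_ne_zero 0 one_ne_zero, gaussianPDF_def]
  have h : (fun x => ENNReal.ofReal (gaussianPDFReal 0 1 x))
      = fun x => ((Real.toNNReal (gaussianPDFReal 0 1 x) : ℝ≥0) : ℝ≥0∞) := rfl
  rw [h, integrable_withDensity_iff_integrable_smul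
    (show Measurable fun x => (gaussianPDFReal 0 1 x).toNNReal from measurable_real_toNNReal.comp (measurable_gaussianPDFReal 0 1))]
  constructor <;> intro hi <;> refine hi.congr (Filter.Eventually.of_forall fun x => ?_) <;>
    simp [NNReal.smul_def, Real.coe_toNNReal _ (gaussianPDFReal_nonneg 0 1 x)]

lemma aux_pdf_mul (c a x : ℝ) :
    gaussianPDFReal 0 1 x * exp (c * x ^ 2 + a * x)
      = (Real.sqrt (2 * π))⁻¹ * exp (-(1 / 2 - c) * x ^ 2 + a * x) := by
  simp only [gaussianPDFReal, NNReal.coe_one, mul_one, sub_zero]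
  rw [mul_assoc, ← exp_add]
  ring_nf

lemma aux_integrable_gauss_quad (c a : ℝ) (hc : c < 1 / 2) :
    Integrable (fun x => exp (c * x ^ 2 + a * x)) (gaussianReal 0 1) := by
  rw [aux_integrable_gaussianReal_iff]
  simp_rw [aux_pdf_mul]
  exact (aux_integrable_gauss_lin (1 / 2 - c) a (by linarith)).const_mul _

lemma aux_integral_gauss_quad (c a : ℝ) (hc : c < 1 / 2) :
    ∫ x, exp (c * x ^ 2 + a * x) ∂(gaussianReal 0 1)
      = (Real.sqrt (1 - 2 * c))⁻¹ * exp (a ^ 2 / (2 * (1 - 2 * c))) := by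
  rw [aux_integral_gaussianReal]
  simp_rw [aux_pdf_mul]
  rw [MeasureTheory.integral_const_mul, aux_integral_gauss_lin (1 / 2 - c) a (by linarith)]
  have h2c : (0:ℝ) < 1 - 2 * c := by linarith
  have hπ : (0:ℝ) < π := pi_pos
  rw [show a ^ 2 / (4 * (1 / 2 - c)) = a ^ 2 / (2 * (1 - 2 * c)) by ring_nf]
  rw [mul_comm (exp _), ← mul_assoc]
  congr 1
  rw [show π / (1 / 2 - c) = (2 * π) / (1 - 2 * c) by field_simp]
  rw [Real.sqrt_div (by positivity : (0:ℝ) ≤ 2 * π)]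
  have h1 : Real.sqrt (2 * π) ≠ 0 := by positivity
  have h2 : Real.sqrt (1 - 2 * c) ≠ 0 := by positivity
  field_simp

lemma aux_inner (t x : ℝ) :
    ∫ y, exp (t * (x * y)) ∂(gaussianReal 0 1) = exp (t ^ 2 / 2 * x ^ 2 + 0 * x) := by
  have h1 : (fun y => exp (t * (x * y))) = fun y => exp (0 * y ^ 2 + (t * x) * y) := by
    funext y; exact congrArg exp (by ring)
  rw [h1, aux_integral_gauss_quad 0 (t * x) (by norm_num)]
  norm_num
  exact (by ring : (t * x) ^ 2 / 2 = t ^ 2 / 2 * x ^ 2)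

lemma aux_inner_int (t x : ℝ) :
    Integrable (fun y => exp (t * (x * y))) (gaussianReal 0 1) := by
  have h1 : (fun y => exp (t * (x * y))) = fun y => exp (0 * y ^ 2 + (t * x) * y) := by
    funext y; exact congrArg exp (by ring)
  rw [h1]; exact aux_integrable_gauss_quad 0 (t * x) (by norm_num)

lemma aux_integrable_prod (t : ℝ) (ht : t ^ 2 < 1) :
    Integrable (fun p : ℝ × ℝ => exp (t * (p.1 * p.2)))
      ((gaussianReal 0 1).prod (gaussianReal 0 1)) := by
  have hmeas : AEStronglyMeasurable (fun p : ℝ × ℝ => exp (t * (p.1 * p.2)))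
      ((gaussianReal 0 1).prod (gaussianReal 0 1)) :=
    (Continuous.aestronglyMeasurable (by continuity))
  rw [MeasureTheory.integrable_prod_iff hmeas]
  refine ⟨Filter.Eventually.of_forall fun x => aux_inner_int t x, ?_⟩
  have hval : (fun x => ∫ y, ‖exp (t * (x * y))‖ ∂(gaussianReal 0 1))
      = fun x => exp (t ^ 2 / 2 * x ^ 2 + 0 * x) := by
    funext x
    simp_rw [Real.norm_eq_abs, abs_exp]
    exact aux_inner t x
  rw [hval]
  exact aux_integrable_gauss_quad (t ^ 2 / 2) 0 (by linarith)

lemma aux_integral_prod (t : ℝ) (ht : t ^ 2 < 1) :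
    ∫ p : ℝ × ℝ, exp (t * (p.1 * p.2)) ∂((gaussianReal 0 1).prod (gaussianReal 0 1))
      = (Real.sqrt (1 - t ^ 2))⁻¹ := by
  rw [MeasureTheory.integral_prod _ (aux_integrable_prod t ht)]
  simp_rw [aux_inner]
  rw [aux_integral_gauss_quad (t ^ 2 / 2) 0 (by linarith)]
  norm_num
  ring_nf

lemma aux_pair_indep {Ω : Type*} [MeasurableSpace Ω] (μ : Measure Ω) [IsProbabilityMeasure μ]
    (m : ℕ) (X Y : Fin m → Ω → ℝ) (hX : ∀ i, Measurable (X i)) (hY : ∀ i, Measurable (Y i))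
    (hindep : iIndepFun
      (Sum.elim X Y) μ) :
    iIndepFun
      (fun i ω => (X i ω, Y i ω)) μ := by
  classical
  rw [iIndepFun_iff_iIndep]
  set ps : Fin m → Set (Set Ω) := fun i =>
    {s | ∃ A B : Set ℝ, MeasurableSet A ∧ MeasurableSet B ∧ s = X i ⁻¹' A ∩ Y i ⁻¹' B} with hps
  refine iIndepSets.iIndep (fun i => ((hX i).prodMk (hY i)).comap_le) ps ?_ ?_ ?_
  · -- IsPiSystem
    rintro i s ⟨A, B, hA, hB, rfl⟩ t ⟨A', B', hA', hB', rfl⟩ -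
    refine ⟨A ∩ A', B ∩ B', hA.inter hA', hB.inter hB', ?_⟩
    ext ω; simp only [Set.mem_inter_iff, Set.mem_preimage]; tauto
  · -- generating
    intro i
    rw [show (Prod.instMeasurableSpace : MeasurableSpace (ℝ × ℝ)) = MeasurableSpace.generateFrom
        (Set.image2 (· ×ˢ ·) {s : Set ℝ | MeasurableSet s} {t : Set ℝ | MeasurableSet t})
      from generateFrom_prod.symm, MeasurableSpace.comap_generateFrom]
    congr 1
    ext s
    constructor
    · rintro ⟨u, hu, rfl⟩
      obtain ⟨A, hA, B, hB, rfl⟩ := hu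
      exact ⟨A, B, hA, hB, (Set.mk_preimage_prod _ _).symm⟩
    · rintro ⟨A, B, hA, hB, rfl⟩
      exact ⟨A ×ˢ B, Set.mem_image2_of_mem hA hB, Set.mk_preimage_prod _ _⟩
  · -- iIndepSets
    rw [iIndepSets_iff]
    intro s f hf
    choose! A B hA hB hfeq using hf
    set g : Fin m ⊕ Fin m → Set Ω :=
      Sum.elim (fun i => X i ⁻¹' A i) (fun i => Y i ⁻¹' B i) with hg
    have hmeas : ∀ j ∈ s.disjSum s,
        MeasurableSet[((fun _ : Fin m ⊕ Fin m => (inferInstance : MeasurableSpace ℝ)) j).comap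
          (Sum.elim X Y j)] (g j) := by
      rintro (i | i) hj
      · exact ⟨A i, hA i (by simpa using hj), rfl⟩
      · exact ⟨B i, hB i (by simpa using hj), rfl⟩
    have key := hindep.meas_biInter (S := s.disjSum s) hmeas
    have hU : (⋂ j ∈ s.disjSum s, g j) = ⋂ i ∈ s, f i := by
      ext ω
      simp only [Set.mem_iInter, Finset.mem_disjSum]
      constructor
      · intro h i hi
        rw [hfeq i hi]
        exact ⟨h (Sum.inl i) (Or.inl ⟨i, hi, rfl⟩), h (Sum.inr i) (Or.inr ⟨i, hi, rfl⟩)⟩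
      · rintro h j (⟨i, hi, rfl⟩ | ⟨i, hi, rfl⟩)
        · exact ((hfeq i hi ▸ h i hi)).1
        · exact ((hfeq i hi ▸ h i hi)).2
    rw [hU, Finset.prod_disjSum] at key
    rw [key]
    rw [← Finset.prod_mul_distrib]
    refine Finset.prod_congr rfl fun i hi => ?_
    rw [hfeq i hi]
    exact ((hindep.indepFun (show (Sum.inl i : Fin m ⊕ Fin m) ≠ Sum.inr i by
      simp)).measure_inter_preimage_eq_mul _ _ (hA i hi) (hB i hi)).symm

/-- If `m ≥ 2` with `8·log m ≤ m` and `X_1,…,X_m,Y_1,…,Y_m` are `2m` mutually independent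
standard Gaussian `N(0,1)` random variables, then
`P[|Σ_i X_i·Y_i| ≥ √(8·m·log m)] ≤ 2/m`. -/
theorem stmt_4 {Ω : Type*} [MeasurableSpace Ω] (μ : Measure Ω) [IsProbabilityMeasure μ]
    (m : ℕ) (hm : 2 ≤ m) (hlog : 8 * Real.log m ≤ m)
    (X Y : Fin m → Ω → ℝ)
    (hX : ∀ i, Measurable (X i)) (hY : ∀ i, Measurable (Y i))
    (hindep : iIndepFun
      (Sum.elim X Y) μ)
    (hlawX : ∀ i, Measure.map (X i) μ = gaussianReal 0 1)
    (hlawY : ∀ i, Measure.map (Y i) μ = gaussianReal 0 1) :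
    μ {ω | Real.sqrt (8 * m * Real.log m) ≤ |∑ i, X i ω * Y i ω|}
      ≤ ENNReal.ofReal (2 / m) := by
  classical
  have hm1 : (1:ℝ) < m := by exact_mod_cast Nat.lt_of_lt_of_le one_lt_two hm
  have hmpos : (0:ℝ) < m := by linarith
  have hlogpos : 0 < Real.log m := Real.log_pos hm1
  set a : ℝ := Real.sqrt (8 * m * Real.log m) with ha
  have ha2 : a ^ 2 = 8 * m * Real.log m := Real.sq_sqrt (by positivity)
  have hapos : 0 < a := Real.sqrt_pos.mpr (by positivity)
  set t : ℝ := a / (2 * m) with htdef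
  have htpos : 0 < t := by positivity
  set u : ℝ := t ^ 2 with hu
  have hu_eq : u = 2 * Real.log m / m := by
    rw [hu, htdef, div_pow, ha2]
    rw [div_eq_div_iff (by positivity) (by positivity)]
    ring
  have hupos : 0 < u := by rw [hu]; positivity
  have hu4 : u ≤ 1 / 4 := by
    rw [hu_eq, div_le_div_iff₀ hmpos (by norm_num)]
    linarith
  have hu1 : u < 1 := by linarith
  have hta : t * a = 4 * Real.log m := by
    rw [htdef, div_mul_eq_mul_div, ← sq, ha2]
    rw [div_eq_iff (by positivity : (2:ℝ) * m ≠ 0)]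
    ring
  -- products
  set Z : Fin m → Ω → ℝ := fun i ω => X i ω * Y i ω with hZ
  have hZmeas : ∀ i, Measurable (Z i) := fun i => (hX i).mul (hY i)
  have hW : ∀ i, Measurable (fun ω => (X i ω, Y i ω)) := fun i => (hX i).prodMk (hY i)
  have hWindep := aux_pair_indep μ m X Y hX hY hindep
  have hZindep : iIndepFun Z μ :=
    hWindep.comp (fun _ (p : ℝ × ℝ) => p.1 * p.2) (fun _ => measurable_fst.mul measurable_snd)
  have hmap : ∀ i, Measure.map (fun ω => (X i ω, Y i ω)) μ
      = (gaussianReal 0 1).prod (gaussianReal 0 1) := by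
    intro i
    have h := hindep.indepFun (show (Sum.inl i : Fin m ⊕ Fin m) ≠ Sum.inr i by simp)
    have := (indepFun_iff_map_prod_eq_prod_map_map (μ := μ)
      (hX i).aemeasurable (hY i).aemeasurable).mp h
    rw [this, hlawX i, hlawY i]
  have hcont : ∀ t' : ℝ, Continuous fun p : ℝ × ℝ => exp (t' * (p.1 * p.2)) := fun t' =>
    continuous_exp.comp (continuous_const.mul (continuous_fst.mul continuous_snd))
  have hint : ∀ t' : ℝ, t' ^ 2 < 1 → ∀ i, Integrable (fun ω => exp (t' * Z i ω)) μ := by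
    intro t' ht' i
    have h2 : Integrable (fun p : ℝ × ℝ => exp (t' * (p.1 * p.2)))
        (Measure.map (fun ω => (X i ω, Y i ω)) μ) := by
      rw [hmap i]; exact aux_integrable_prod t' ht'
    exact (integrable_map_measure (hcont t').aestronglyMeasurable
      ((hW i).aemeasurable)).mp h2
  have hmgf : ∀ t' : ℝ, t' ^ 2 < 1 → ∀ i,
      mgf (Z i) μ t' = (Real.sqrt (1 - t' ^ 2))⁻¹ := by
    intro t' ht' i
    have h1 : mgf (Z i) μ t'
        = ∫ p : ℝ × ℝ, exp (t' * (p.1 * p.2)) ∂(Measure.map (fun ω => (X i ω, Y i ω)) μ) :=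
      (integral_map ((hW i).aemeasurable) (hcont t').aestronglyMeasurable).symm
    rw [h1, hmap i, aux_integral_prod t' ht']
  set S : Ω → ℝ := ∑ i, Z i with hS
  have hmgfS : ∀ t' : ℝ, t' ^ 2 < 1 → mgf S μ t' = ((Real.sqrt (1 - t' ^ 2))⁻¹) ^ m := by
    intro t' ht'
    rw [hS, hZindep.mgf_sum hZmeas Finset.univ]
    simp [hmgf t' ht']
  have hintS : ∀ t' : ℝ, t' ^ 2 < 1 → Integrable (fun ω => exp (t' * S ω)) μ :=
    fun t' ht' => hZindep.integrable_exp_mul_sum hZmeas (fun i _ => hint t' ht' i)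
  -- numeric bound
  have h1u : (0:ℝ) < 1 - u := by linarith
  have hlog1u : -(4 / 3 * u) ≤ Real.log (1 - u) := by
    have h2 : 1 / (1 - u) ≤ Real.exp (u / (1 - u)) := by
      rw [show (1:ℝ) / (1 - u) = u / (1 - u) + 1 by field_simp; ring]
      exact Real.add_one_le_exp _
    have h1 : Real.exp (-(u / (1 - u))) ≤ 1 - u := by
      rw [Real.exp_neg]
      calc (Real.exp (u / (1 - u)))⁻¹ ≤ (1 / (1 - u))⁻¹ := by
            apply inv_anti₀ (by positivity) h2
        _ = 1 - u := by field_simp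
    have h3 : -(u / (1 - u)) ≤ Real.log (1 - u) := by
      have := Real.log_le_log (Real.exp_pos _) h1
      rwa [Real.log_exp] at this
    have h4 : u / (1 - u) ≤ 4 / 3 * u := by
      rw [div_le_iff₀ h1u]
      nlinarith
    linarith
  have hpow : ((Real.sqrt (1 - u))⁻¹) ^ m = Real.exp (-(m / 2 * Real.log (1 - u))) := by
    have hsq : (Real.sqrt (1 - u))⁻¹ = Real.exp (-(Real.log (1 - u) / 2)) := by
      rw [Real.exp_neg, ← Real.log_sqrt h1u.le, Real.exp_log (Real.sqrt_pos.mpr h1u)]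
    rw [hsq, ← Real.exp_nat_mul]
    congr 1
    ring
  have hB : Real.exp (-t * a) * ((Real.sqrt (1 - u))⁻¹) ^ m ≤ 1 / (m:ℝ) := by
    rw [hpow, ← Real.exp_add]
    have hmu : (m:ℝ) * u = 2 * Real.log m := by
      rw [hu_eq]; field_simp
    have h5 : -(↑m / 2 * Real.log (1 - u)) ≤ 4 / 3 * Real.log m := by
      have h6 : -(↑m / 2 * Real.log (1 - u)) ≤ (m:ℝ) / 2 * (4 / 3 * u) := by
        nlinarith [hlog1u, hmpos]
      calc -(↑m / 2 * Real.log (1 - u)) ≤ (m:ℝ) / 2 * (4 / 3 * u) := h6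
        _ = 4 / 3 * Real.log m := by nlinarith [hmu]
    have h7 : -t * a + -(↑m / 2 * Real.log (1 - u)) ≤ -Real.log m := by
      rw [neg_mul, hta]; linarith
    calc Real.exp _ ≤ Real.exp (-Real.log m) := Real.exp_le_exp.mpr h7
      _ = 1 / (m:ℝ) := by rw [Real.exp_neg, Real.exp_log hmpos, one_div]
  -- Chernoff both tails
  have ht2 : t ^ 2 < 1 := hu ▸ hu1
  have hT1 : (μ {ω | a ≤ S ω}).toReal ≤ 1 / (m:ℝ) := by
    have := measure_ge_le_exp_mul_mgf (μ := μ) (X := S) a htpos.le (hintS t ht2)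
    rw [hmgfS t ht2] at this
    exact this.trans hB
  have hT2 : (μ {ω | S ω ≤ -a}).toReal ≤ 1 / (m:ℝ) := by
    have hnt2 : (-t) ^ 2 < 1 := by rwa [neg_sq]
    have := measure_le_le_exp_mul_mgf (μ := μ) (X := S) (-a)
      (neg_nonpos.mpr htpos.le) (hintS (-t) hnt2)
    rw [hmgfS (-t) hnt2, neg_sq] at this
    have heq : -(-t) * -a = -t * a := by ring
    rw [heq] at this
    exact this.trans hB
  -- combine
  have hsub : {ω | a ≤ |∑ i, X i ω * Y i ω|} ⊆ {ω | a ≤ S ω} ∪ {ω | S ω ≤ -a} := by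
    intro ω hω
    have hSω : S ω = ∑ i, X i ω * Y i ω := by
      rw [hS]; simp [hZ, Finset.sum_apply]
    rcases le_abs.mp (Set.mem_setOf_eq ▸ hω) with h | h
    · exact Or.inl (by rw [Set.mem_setOf_eq, hSω]; exact h)
    · exact Or.inr (by rw [Set.mem_setOf_eq, hSω]; linarith
        )
  have hle1 : μ {ω | a ≤ S ω} ≤ ENNReal.ofReal (1 / (m:ℝ)) :=
    (ENNReal.le_ofReal_iff_toReal_le (measure_ne_top μ _) (by positivity)).mpr hT1
  have hle2 : μ {ω | S ω ≤ -a} ≤ ENNReal.ofReal (1 / (m:ℝ)) :=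
    (ENNReal.le_ofReal_iff_toReal_le (measure_ne_top μ _) (by positivity)).mpr hT2
  calc μ {ω | a ≤ |∑ i, X i ω * Y i ω|}
      ≤ μ ({ω | a ≤ S ω} ∪ {ω | S ω ≤ -a}) := measure_mono hsub
    _ ≤ μ {ω | a ≤ S ω} + μ {ω | S ω ≤ -a} := measure_union_le _ _
    _ ≤ ENNReal.ofReal (1 / (m:ℝ)) + ENNReal.ofReal (1 / (m:ℝ)) := add_le_add hle1 hle2
    _ = ENNReal.ofReal (2 / (m:ℝ)) := by
        rw [← ENNReal.ofReal_add (by positivity) (by positivity)]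
        congr 1
        ring
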